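/- arXiv:2002.09641 — 4 statements merged into one kernel-verified Lean document; each statement's English description precedes it below -/
import Mathlib

section
/- For $\beta \in (1/2, 1)$ and $\theta > 0$, there exists a constant $C > 0$ (independent of $T$) such that for all $T \geq 1$, $\int_{[0,T]^2} e^{-\theta|r-s|}(rs)^{\beta-1}\,dr\,ds \leq C\, T^{2\beta-1}$. -/
open MeasureTheory Real Set

lemma exp_int_right (θ a b c : ℝ) (hθ : 0 < θ) (hab : a ≤ b) (hca : c ≤ a) :
    ∫ s in Set.Ioc a b, Real.exp (-θ * (s - c)) ≤ 1/θ := by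
  rw [← intervalIntegral.integral_of_le hab]
  have h1 : ∀ s : ℝ, Real.exp (-θ * (s - c)) = Real.exp (-θ * s + θ * c) := by
    intro s; ring_nf
  simp_rw [h1]
  rw [intervalIntegral.integral_comp_mul_add Real.exp (neg_ne_zero.2 hθ.ne') (θ*c),
    integral_exp, smul_eq_mul]
  have h2 : (0:ℝ) < Real.exp (-θ * b + θ * c) := Real.exp_pos _
  have h3 : Real.exp (-θ * a + θ * c) ≤ 1 := by
    rw [← Real.exp_zero]; apply Real.exp_le_exp.2; nlinarith
  have h4 : (-θ)⁻¹ * (Real.exp (-θ * b + θ * c) - Real.exp (-θ * a + θ * c))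
      = (Real.exp (-θ * a + θ * c) - Real.exp (-θ * b + θ * c)) / θ := by
    rw [inv_neg]; ring
  rw [h4, div_le_div_iff₀ hθ hθ]
  nlinarith

lemma exp_int_left (θ a b c : ℝ) (hθ : 0 < θ) (hab : a ≤ b) (hbc : b ≤ c) :
    ∫ s in Set.Ioc a b, Real.exp (-θ * (c - s)) ≤ 1/θ := by
  rw [← intervalIntegral.integral_of_le hab]
  have h1 : ∀ s : ℝ, Real.exp (-θ * (c - s)) = Real.exp (θ * s + (-θ * c)) := by
    intro s; ring_nf
  simp_rw [h1]
  rw [intervalIntegral.integral_comp_mul_add Real.exp hθ.ne' (-θ*c),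
    integral_exp, smul_eq_mul]
  have h2 : (0:ℝ) < Real.exp (θ * a + -θ * c) := Real.exp_pos _
  have h3 : Real.exp (θ * b + -θ * c) ≤ 1 := by
    rw [← Real.exp_zero]; apply Real.exp_le_exp.2; nlinarith
  have h4 : θ⁻¹ * (Real.exp (θ * b + -θ * c) - Real.exp (θ * a + -θ * c))
      = (Real.exp (θ * b + -θ * c) - Real.exp (θ * a + -θ * c)) / θ := by
    field_simp
  rw [h4, div_le_div_iff₀ hθ hθ]
  nlinarith

lemma exp_abs_int (θ a b r : ℝ) (hθ : 0 < θ) (har : a ≤ r) (hrb : r ≤ b) :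
    ∫ s in Set.Ioc a b, Real.exp (-θ * |r - s|) ≤ 2/θ := by
  have hcont : Continuous fun s : ℝ => Real.exp (-θ * |r - s|) := by
    continuity
  have hint1 : IntegrableOn (fun s : ℝ => Real.exp (-θ * |r - s|)) (Set.Ioc a r) :=
    hcont.integrableOn_Ioc
  have hint2 : IntegrableOn (fun s : ℝ => Real.exp (-θ * |r - s|)) (Set.Ioc r b) :=
    hcont.integrableOn_Ioc
  rw [← Set.Ioc_union_Ioc_eq_Ioc har hrb,
    setIntegral_union (Set.Ioc_disjoint_Ioc_of_le le_rfl) measurableSet_Ioc hint1 hint2]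
  have e1 : ∫ s in Set.Ioc a r, Real.exp (-θ * |r - s|)
      = ∫ s in Set.Ioc a r, Real.exp (-θ * (r - s)) := by
    apply setIntegral_congr_fun measurableSet_Ioc
    intro s hs
    beta_reduce
    rw [abs_of_nonneg (by linarith [hs.2] : (0:ℝ) ≤ r - s)]
  have e2 : ∫ s in Set.Ioc r b, Real.exp (-θ * |r - s|)
      = ∫ s in Set.Ioc r b, Real.exp (-θ * (s - r)) := by
    apply setIntegral_congr_fun measurableSet_Ioc
    intro s hs
    beta_reduce
    rw [abs_of_nonpos (by linarith [hs.1] : r - s ≤ 0), neg_sub]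
  rw [e1, e2]
  have b1 := exp_int_left θ a r r hθ har le_rfl
  have b2 := exp_int_right θ r b r hθ hrb le_rfl
  have : (2:ℝ)/θ = 1/θ + 1/θ := by ring
  rw [this]
  exact add_le_add b1 b2

lemma rpow_integrableOn (γ b : ℝ) (hγ : -1 < γ) (hb : 0 ≤ b) :
    IntegrableOn (fun s : ℝ => s ^ γ) (Set.Ioc 0 b) := by
  have := (intervalIntegral.intervalIntegrable_rpow' (a := 0) (b := b) hγ)
  rwa [intervalIntegrable_iff_integrableOn_Ioc_of_le hb] at this

lemma rpow_int (β b : ℝ) (hβ : 0 < β) (hb : 0 ≤ b) :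
    ∫ s in Set.Ioc (0:ℝ) b, s ^ (β - 1) = b ^ β / β := by
  rw [← intervalIntegral.integral_of_le hb,
    integral_rpow (Or.inl (by linarith : (-1:ℝ) < β - 1))]
  rw [sub_add_cancel, Real.zero_rpow hβ.ne']
  ring

lemma inner_bound (β θ T r : ℝ) (hβ1 : 1/2 < β) (hβ2 : β < 1) (hθ : 0 < θ)
    (hr0 : 0 < r) (hrT : r ≤ T) :
    ∫ s in Set.Ioc (0:ℝ) T, Real.exp (-θ * |r - s|) * (r * s) ^ (β - 1)
      ≤ (2/(θ*β) + 4/θ) * r ^ (2*β - 2) := by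
  have hβ0 : 0 < β := by linarith
  have h2 : (0:ℝ) ≤ r/2 := by linarith
  have hr2T : r/2 ≤ T := by linarith
  have hT0 : (0:ℝ) ≤ T := by linarith
  set f : ℝ → ℝ := fun s => Real.exp (-θ * |r - s|) * (r * s) ^ (β - 1) with hf
  have hfnn : ∀ s : ℝ, 0 < s → 0 ≤ f s := fun s hs =>
    mul_nonneg (Real.exp_nonneg _) (Real.rpow_nonneg (by positivity) _)
  have hexple : ∀ s : ℝ, Real.exp (-θ * |r - s|) ≤ 1 := by
    intro s
    rw [← Real.exp_zero]
    apply Real.exp_le_exp.2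
    have : 0 ≤ |r - s| := abs_nonneg _
    nlinarith
  have hmeas : AEStronglyMeasurable f (volume.restrict (Set.Ioc 0 T)) := by
    apply Measurable.aestronglyMeasurable
    fun_prop
  have hintf : IntegrableOn f (Set.Ioc 0 T) := by
    apply Integrable.mono'
      ((rpow_integrableOn (β-1) T (by linarith) hT0).const_mul (r^(β-1))) hmeas
    rw [ae_restrict_iff' measurableSet_Ioc]
    filter_upwards with s hs
    rw [Real.norm_eq_abs, abs_of_nonneg (hfnn s hs.1)]
    rw [hf]
    simp only []
    rw [Real.mul_rpow hr0.le hs.1.le]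
    calc Real.exp (-θ * |r - s|) * (r^(β-1) * s^(β-1))
        ≤ 1 * (r^(β-1) * s^(β-1)) := by
          apply mul_le_mul_of_nonneg_right (hexple s) (mul_nonneg (Real.rpow_nonneg hr0.le _) (Real.rpow_nonneg hs.1.le _))
      _ = r^(β-1) * s^(β-1) := one_mul _
  have hint1 : IntegrableOn f (Set.Ioc 0 (r/2)) :=
    hintf.mono_set (Set.Ioc_subset_Ioc_right hr2T)
  have hint2 : IntegrableOn f (Set.Ioc (r/2) T) :=
    hintf.mono_set (Set.Ioc_subset_Ioc_left h2)
  rw [← Set.Ioc_union_Ioc_eq_Ioc h2 hr2T,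
    setIntegral_union (Set.Ioc_disjoint_Ioc_of_le le_rfl) measurableSet_Ioc hint1 hint2]
  have e3 : r^(β-1) * r^β = r^(2*β-2) * r := by
    calc r^(β-1) * r^β = r^(β-1+β) := (Real.rpow_add hr0 _ _).symm
      _ = r^((2*β-2)+1) := by ring_nf
      _ = r^(2*β-2) * r^(1:ℝ) := Real.rpow_add hr0 _ _
      _ = r^(2*β-2) * r := by rw [Real.rpow_one]
  have e4 : r^(β-1) * r^(β-1) = r^(2*β-2) := by
    rw [← Real.rpow_add hr0]; ring_nf
  have p1 : ∫ s in Set.Ioc (0:ℝ) (r/2), f s ≤ 2/(θ*β) * r ^ (2*β-2) := by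
    have hmaj : IntegrableOn
        (fun s : ℝ => (Real.exp (-θ*(r/2)) * r^(β-1)) * s^(β-1)) (Set.Ioc 0 (r/2)) :=
      (rpow_integrableOn (β-1) (r/2) (by linarith) h2).const_mul _
    have step : ∫ s in Set.Ioc (0:ℝ) (r/2), f s
        ≤ ∫ s in Set.Ioc (0:ℝ) (r/2), (Real.exp (-θ*(r/2)) * r^(β-1)) * s^(β-1) := by
      apply setIntegral_mono_on hint1 hmaj measurableSet_Ioc
      intro s hs
      rw [hf]; beta_reduce
      rw [Real.mul_rpow hr0.le hs.1.le]
      have hexp2 : Real.exp (-θ*|r-s|) ≤ Real.exp (-θ*(r/2)) := by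
        apply Real.exp_le_exp.2
        have habs : r/2 ≤ |r - s| := by
          rw [abs_of_nonneg (by linarith [hs.2] : (0:ℝ) ≤ r - s)]
          linarith [hs.2]
        nlinarith
      calc Real.exp (-θ*|r-s|) * (r^(β-1) * s^(β-1))
          ≤ Real.exp (-θ*(r/2)) * (r^(β-1) * s^(β-1)) :=
            mul_le_mul_of_nonneg_right hexp2
              (mul_nonneg (Real.rpow_nonneg hr0.le _) (Real.rpow_nonneg hs.1.le _))
        _ = (Real.exp (-θ*(r/2)) * r^(β-1)) * s^(β-1) := by ring
    rw [MeasureTheory.integral_const_mul, rpow_int β (r/2) hβ0 h2] at step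
    refine step.trans ?_
    have e1 : Real.exp (-θ*(r/2)) ≤ 2/(θ*r) := by
      rw [neg_mul, Real.exp_neg]
      have h5 : 0 < θ*(r/2) := by positivity
      have hx : θ*(r/2) ≤ Real.exp (θ*(r/2)) := by
        have := Real.add_one_le_exp (θ*(r/2)); linarith
      have h6 := inv_anti₀ h5 hx
      refine h6.trans_eq ?_
      field_simp
    have e2 : (r/2)^β ≤ r^β := Real.rpow_le_rpow (by positivity) (by linarith) hβ0.le
    have hrp1 : (0:ℝ) ≤ r^(β-1) := Real.rpow_nonneg hr0.le _
    calc Real.exp (-θ*(r/2)) * r^(β-1) * ((r/2)^β/β)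
        ≤ (2/(θ*r)) * (r^(β-1) * (r^β/β)) := by
          rw [mul_assoc]
          apply mul_le_mul e1 ?_ ?_ (by positivity)
          · exact mul_le_mul_of_nonneg_left (by gcongr) hrp1
          · exact mul_nonneg hrp1 (div_nonneg (Real.rpow_nonneg h2 _) hβ0.le)
      _ = (2/(θ*r)) * (r^(2*β-2) * r/β) := by rw [mul_div_assoc', e3]
      _ = 2/(θ*β) * r^(2*β-2) := by field_simp
  have hcont : Continuous fun s : ℝ => Real.exp (-θ * |r - s|) := by continuity
  have p2 : ∫ s in Set.Ioc (r/2) T, f s ≤ 4/θ * r ^ (2*β-2) := by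
    have hmaj2 : IntegrableOn
        (fun s : ℝ => (r^(β-1) * (r/2)^(β-1)) * Real.exp (-θ * |r - s|))
        (Set.Ioc (r/2) T) :=
      (hcont.integrableOn_Ioc).const_mul _
    have step : ∫ s in Set.Ioc (r/2) T, f s
        ≤ ∫ s in Set.Ioc (r/2) T, (r^(β-1) * (r/2)^(β-1)) * Real.exp (-θ * |r - s|) := by
      apply setIntegral_mono_on hint2 hmaj2 measurableSet_Ioc
      intro s hs
      have hs0 : 0 < s := lt_of_le_of_lt h2 hs.1
      rw [hf]; beta_reduce
      rw [Real.mul_rpow hr0.le hs0.le]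
      have hsle : s^(β-1) ≤ (r/2)^(β-1) :=
        Real.rpow_le_rpow_of_nonpos (half_pos hr0) hs.1.le (by linarith)
      calc Real.exp (-θ*|r-s|) * (r^(β-1) * s^(β-1))
          ≤ Real.exp (-θ*|r-s|) * (r^(β-1) * (r/2)^(β-1)) :=
            mul_le_mul_of_nonneg_left
              (mul_le_mul_of_nonneg_left hsle (Real.rpow_nonneg hr0.le _))
              (Real.exp_nonneg _)
        _ = (r^(β-1)*(r/2)^(β-1)) * Real.exp (-θ*|r-s|) := by ring
    rw [MeasureTheory.integral_const_mul] at step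
    have habs := exp_abs_int θ (r/2) T r hθ (by linarith) hrT
    have hc : 0 ≤ r^(β-1) * (r/2)^(β-1) :=
      mul_nonneg (Real.rpow_nonneg hr0.le _) (Real.rpow_nonneg h2 _)
    have step2 : ∫ s in Set.Ioc (r/2) T, f s ≤ (r^(β-1)*(r/2)^(β-1)) * (2/θ) :=
      step.trans (mul_le_mul_of_nonneg_left habs hc)
    refine step2.trans ?_
    have hhalf : (r/2)^(β-1) = r^(β-1) * 2^(1-β) := by
      rw [Real.div_rpow hr0.le (by norm_num : (0:ℝ) ≤ 2), div_eq_mul_inv,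
        ← Real.rpow_neg (by norm_num : (0:ℝ) ≤ 2)]
      ring_nf
    have h2b : (2:ℝ)^(1-β) ≤ 2 := by
      calc (2:ℝ)^(1-β) ≤ 2^(1:ℝ) :=
            Real.rpow_le_rpow_of_exponent_le one_le_two (by linarith)
        _ = 2 := Real.rpow_one 2
    calc (r^(β-1)*(r/2)^(β-1)) * (2/θ)
        = (r^(β-1)*r^(β-1)) * 2^(1-β) * (2/θ) := by rw [hhalf]; ring
      _ = r^(2*β-2) * 2^(1-β) * (2/θ) := by rw [e4]
      _ ≤ r^(2*β-2) * 2 * (2/θ) := by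
          apply mul_le_mul_of_nonneg_right
            (mul_le_mul_of_nonneg_left h2b (Real.rpow_nonneg hr0.le _)) (by positivity)
      _ = 4/θ * r^(2*β-2) := by ring
  calc (∫ s in Set.Ioc (0:ℝ) (r/2), f s) + ∫ s in Set.Ioc (r/2) T, f s
      ≤ 2/(θ*β) * r^(2*β-2) + 4/θ * r^(2*β-2) := add_le_add p1 p2
    _ = (2/(θ*β) + 4/θ) * r^(2*β-2) := by ring


theorem stmt_2 (β θ : ℝ) (hβ : β ∈ Set.Ioo (1/2 : ℝ) 1) (hθ : 0 < θ) :
    ∃ C > (0:ℝ), ∀ T : ℝ, 1 ≤ T →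
      (∫ r in Set.Ioc (0:ℝ) T, ∫ s in Set.Ioc (0:ℝ) T,
          Real.exp (-θ * |r - s|) * (r * s) ^ (β - 1))
        ≤ C * T ^ (2 * β - 1) := by
  obtain ⟨hβ1, hβ2⟩ := hβ
  have hβ0 : 0 < β := by linarith
  have hb21 : 0 < 2*β - 1 := by linarith
  have hC0 : 0 < (2/(θ*β) + 4/θ) / (2*β - 1) :=
    div_pos (add_pos (div_pos two_pos (mul_pos hθ hβ0))
      (div_pos (by norm_num) hθ)) hb21
  refine ⟨(2/(θ*β) + 4/θ) / (2*β - 1), hC0, ?_⟩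
  intro T hT
  have hT0 : (0:ℝ) ≤ T := by linarith
  have hmono : (∫ r in Set.Ioc (0:ℝ) T, ∫ s in Set.Ioc (0:ℝ) T,
        Real.exp (-θ * |r - s|) * (r * s) ^ (β - 1))
      ≤ ∫ r in Set.Ioc (0:ℝ) T, (2/(θ*β) + 4/θ) * r ^ (2*β - 2) := by
    apply integral_mono_of_nonneg
    · refine (ae_restrict_iff' measurableSet_Ioc).mpr ?_
      filter_upwards with r hr
      exact setIntegral_nonneg measurableSet_Ioc fun s hs =>
        mul_nonneg (Real.exp_nonneg _)
          (Real.rpow_nonneg (mul_nonneg hr.1.le hs.1.le) _)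
    · exact (rpow_integrableOn (2*β-2) T (by linarith) hT0).const_mul _
    · refine (ae_restrict_iff' measurableSet_Ioc).mpr ?_
      filter_upwards with r hr
      exact inner_bound β θ T r hβ1 hβ2 hθ hr.1 hr.2
  refine hmono.trans ?_
  rw [MeasureTheory.integral_const_mul]
  have : ∫ r in Set.Ioc (0:ℝ) T, r ^ (2*β - 2) = T ^ (2*β - 1) / (2*β - 1) := by
    rw [show (2*β - 2) = (2*β - 1) - 1 by ring]
    exact rpow_int (2*β - 1) T hb21 hT0
  rw [this]
  rw [div_mul_eq_mul_div, mul_div_assoc]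
end

section
/- For $\beta \in (1/2,1)$ and $\theta > 0$, there exists a constant $C > 0$ independent of $T$ such that for all $r \in [0,T]$, $\int_0^T e^{-\theta|r-u|} u^{\beta-1}\,du \leq C\, r^{\beta-1}$. -/
set_option maxHeartbeats 1000000


open MeasureTheory Real Set

lemma integral_exp_const_mul (c a b : ℝ) (hc : c ≠ 0) :
    ∫ x in a..b, Real.exp (c * x) = (Real.exp (c * b) - Real.exp (c * a)) / c := by
  rw [intervalIntegral.integral_comp_mul_left Real.exp hc, integral_exp, smul_eq_mul]
  ring

theorem stmt_3 (β θ : ℝ) (hβ : β ∈ Set.Ioo (1/2 : ℝ) 1) (hθ : 0 < θ) :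
    ∃ C > (0:ℝ), ∀ T : ℝ, 0 < T → ∀ r ∈ Set.Ioc (0:ℝ) T,
      (∫ u in Set.Ioc (0:ℝ) T, Real.exp (-θ * |r - u|) * u ^ (β - 1))
        ≤ C * r ^ (β - 1) := by
  obtain ⟨hβ1, hβ2⟩ := hβ
  have hβ0 : (0:ℝ) < β := by linarith
  have hbm1 : (-1:ℝ) < β - 1 := by linarith
  refine ⟨2 ^ (1 - β) / (θ * β) + 2 ^ (1 - β) / θ + 1 / θ, by positivity, ?_⟩
  intro T hT r hr
  obtain ⟨hr0, hrT⟩ := hr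
  set f : ℝ → ℝ := fun u => Real.exp (-θ * |r - u|) * u ^ (β - 1) with hf
  have hcont : Continuous fun u : ℝ => Real.exp (-θ * |r - u|) := by
    continuity
  have hint : ∀ a b : ℝ, IntervalIntegrable f volume a b := by
    intro a b
    exact (intervalIntegral.intervalIntegrable_rpow' hbm1).continuousOn_mul
      hcont.continuousOn
  have hr2 : 0 < r / 2 := by linarith
  have h2T : r / 2 ≤ r := by linarith
  -- rewrite as interval integral and split
  have hsplit : (∫ u in Set.Ioc (0:ℝ) T, f u)
      = (∫ u in (0:ℝ)..(r/2), f u) + (∫ u in (r/2)..r, f u) + (∫ u in r..T, f u) := by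
    rw [← intervalIntegral.integral_of_le hT.le]
    rw [← intervalIntegral.integral_add_adjacent_intervals (hint 0 r) (hint r T)]
    rw [← intervalIntegral.integral_add_adjacent_intervals (hint 0 (r/2)) (hint (r/2) r)]
  rw [hsplit]
  have hrpow_pos : (0:ℝ) < r ^ (β - 1) := rpow_pos_of_pos hr0 _
  have hhalf : (r / 2) ^ (β - 1) = 2 ^ (1 - β) * r ^ (β - 1) := by
    rw [div_rpow hr0.le (by norm_num), div_eq_mul_inv, ← rpow_neg (by norm_num : (0:ℝ) ≤ 2)]
    rw [neg_sub]
    ring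
  -- Part A
  have hA : (∫ u in (0:ℝ)..(r/2), f u) ≤ 2 ^ (1 - β) / (θ * β) * r ^ (β - 1) := by
    have hmono : (∫ u in (0:ℝ)..(r/2), f u)
        ≤ ∫ u in (0:ℝ)..(r/2), Real.exp (-θ * (r/2)) * u ^ (β - 1) := by
      apply intervalIntegral.integral_mono_on hr2.le (hint 0 (r/2))
      · exact (intervalIntegral.intervalIntegrable_rpow' hbm1).const_mul _
      · intro u hu
        obtain ⟨hu0, hu2⟩ := hu
        show Real.exp (-θ * |r - u|) * u ^ (β - 1) ≤ _
        have habs : |r - u| = r - u := abs_of_nonneg (by linarith)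
        have hupow : 0 ≤ u ^ (β - 1) := rpow_nonneg hu0 _
        apply mul_le_mul_of_nonneg_right _ hupow
        apply Real.exp_le_exp.mpr
        rw [habs]
        nlinarith
    have hcalc : (∫ u in (0:ℝ)..(r/2), Real.exp (-θ * (r/2)) * u ^ (β - 1))
        = Real.exp (-θ * (r/2)) * ((r/2) ^ β / β) := by
      rw [intervalIntegral.integral_const_mul, integral_rpow (Or.inl hbm1)]
      rw [Real.zero_rpow (by linarith : β - 1 + 1 ≠ 0)]
      ring_nf
    refine hmono.trans ?_
    rw [hcalc]
    have hexp : Real.exp (-θ * (r/2)) * (r/2) ≤ 1/θ := by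
      have h1 := Real.add_one_le_exp (θ * (r/2))
      have h2 : Real.exp (-θ * (r/2)) * Real.exp (θ * (r/2)) = 1 := by
        rw [← Real.exp_add]; ring_nf; exact Real.exp_zero
      rw [le_div_iff₀ hθ]
      nlinarith [(Real.exp_pos (-θ * (r/2))).le, (Real.exp_pos (θ * (r/2))).le]
    have hsp : (r/2) ^ β = (r/2) ^ (β - 1) * (r/2) := by
      rw [← Real.rpow_add_one hr2.ne']; ring_nf
    rw [hsp, hhalf]
    calc Real.exp (-θ * (r / 2)) * (2 ^ (1 - β) * r ^ (β - 1) * (r / 2) / β)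
        = (Real.exp (-θ * (r/2)) * (r/2)) * (2 ^ (1-β) * r ^ (β-1) / β) := by ring
      _ ≤ (1/θ) * (2 ^ (1-β) * r ^ (β-1) / β) :=
          mul_le_mul_of_nonneg_right hexp (by positivity)
      _ = 2 ^ (1 - β) / (θ * β) * r ^ (β - 1) := by field_simp
  -- Part B
  have hB : (∫ u in (r/2)..r, f u) ≤ 2 ^ (1 - β) / θ * r ^ (β - 1) := by
    have hmono : (∫ u in (r/2)..r, f u)
        ≤ ∫ u in (r/2)..r, (r/2) ^ (β - 1) * Real.exp (-θ * r) * Real.exp (θ * u) := by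
      apply intervalIntegral.integral_mono_on h2T (hint _ _)
      · exact (Continuous.intervalIntegrable (by fun_prop) _ _)
      · intro u hu
        obtain ⟨hu1, hu2⟩ := hu
        show Real.exp (-θ * |r - u|) * u ^ (β - 1) ≤ _
        have habs : |r - u| = r - u := abs_of_nonneg (by linarith)
        have hpow : u ^ (β - 1) ≤ (r/2) ^ (β - 1) :=
          rpow_le_rpow_of_nonpos hr2 hu1 (by linarith)
        have hexpeq : Real.exp (-θ * |r - u|) = Real.exp (-θ * r) * Real.exp (θ * u) := by
          rw [habs, ← Real.exp_add]; ring_nf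
        rw [hexpeq]
        have he : 0 < Real.exp (-θ * r) * Real.exp (θ * u) := by positivity
        calc Real.exp (-θ * r) * Real.exp (θ * u) * u ^ (β - 1)
            ≤ Real.exp (-θ * r) * Real.exp (θ * u) * (r/2) ^ (β - 1) :=
              mul_le_mul_of_nonneg_left hpow he.le
          _ = (r/2) ^ (β - 1) * Real.exp (-θ * r) * Real.exp (θ * u) := by ring
    have hcalc : (∫ u in (r/2)..r, (r/2) ^ (β - 1) * Real.exp (-θ * r) * Real.exp (θ * u))
        = (r/2) ^ (β - 1) * Real.exp (-θ * r) * ((Real.exp (θ * r) - Real.exp (θ * (r/2))) / θ) := by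
      rw [intervalIntegral.integral_const_mul, integral_exp_const_mul θ _ _ hθ.ne']
    rw [hcalc] at hmono
    refine hmono.trans ?_
    rw [hhalf]
    have hkey : Real.exp (-θ * r) * ((Real.exp (θ * r) - Real.exp (θ * (r/2))) / θ) ≤ 1/θ := by
      have h2 : Real.exp (-θ * r) * Real.exp (θ * r) = 1 := by
        rw [← Real.exp_add]; ring_nf; exact Real.exp_zero
      have h5 : Real.exp (-θ * r) * (Real.exp (θ * r) - Real.exp (θ * (r/2))) ≤ 1 := by
        nlinarith [(Real.exp_pos (θ * (r/2))).le, (Real.exp_pos (-θ * r)).le]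
      have heq : Real.exp (-θ * r) * ((Real.exp (θ * r) - Real.exp (θ * (r/2))) / θ)
          = (Real.exp (-θ * r) * (Real.exp (θ * r) - Real.exp (θ * (r/2)))) / θ := by ring
      rw [heq]
      exact div_le_div_of_nonneg_right h5 hθ.le
    have h2pos : (0:ℝ) < 2 ^ (1 - β) := rpow_pos_of_pos (by norm_num) _
    calc 2 ^ (1-β) * r ^ (β-1) * Real.exp (-θ * r) * ((Real.exp (θ * r) - Real.exp (θ * (r/2))) / θ)
        = (Real.exp (-θ * r) * ((Real.exp (θ * r) - Real.exp (θ * (r/2))) / θ)) * (2 ^ (1-β) * r ^ (β-1)) := by ring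
      _ ≤ (1/θ) * (2 ^ (1-β) * r ^ (β-1)) := mul_le_mul_of_nonneg_right hkey (by positivity)
      _ = 2 ^ (1 - β) / θ * r ^ (β - 1) := by ring
  -- Part C
  have hC : (∫ u in r..T, f u) ≤ 1 / θ * r ^ (β - 1) := by
    have hmono : (∫ u in r..T, f u)
        ≤ ∫ u in r..T, r ^ (β - 1) * Real.exp (θ * r) * Real.exp (-θ * u) := by
      apply intervalIntegral.integral_mono_on hrT (hint _ _)
      · exact (Continuous.intervalIntegrable (by fun_prop) _ _)
      · intro u hu
        obtain ⟨hu1, hu2⟩ := hu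
        show Real.exp (-θ * |r - u|) * u ^ (β - 1) ≤ _
        have habs : |r - u| = u - r := by rw [abs_sub_comm]; exact abs_of_nonneg (by linarith)
        have hpow : u ^ (β - 1) ≤ r ^ (β - 1) :=
          rpow_le_rpow_of_nonpos hr0 hu1 (by linarith)
        have hexpeq : Real.exp (-θ * |r - u|) = Real.exp (θ * r) * Real.exp (-θ * u) := by
          rw [habs, ← Real.exp_add]; ring_nf
        rw [hexpeq]
        have he : 0 < Real.exp (θ * r) * Real.exp (-θ * u) := by positivity
        calc Real.exp (θ * r) * Real.exp (-θ * u) * u ^ (β - 1)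
            ≤ Real.exp (θ * r) * Real.exp (-θ * u) * r ^ (β - 1) :=
              mul_le_mul_of_nonneg_left hpow he.le
          _ = r ^ (β - 1) * Real.exp (θ * r) * Real.exp (-θ * u) := by ring
    have hcalc : (∫ u in r..T, r ^ (β - 1) * Real.exp (θ * r) * Real.exp (-θ * u))
        = r ^ (β - 1) * Real.exp (θ * r) * ((Real.exp (-θ * T) - Real.exp (-θ * r)) / (-θ)) := by
      rw [intervalIntegral.integral_const_mul]
      have := integral_exp_const_mul (-θ) r T (by linarith)
      simp only [neg_mul] at this ⊢
      rw [this]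
    rw [hcalc] at hmono
    refine hmono.trans ?_
    have hkey : Real.exp (θ * r) * ((Real.exp (-θ * T) - Real.exp (-θ * r)) / (-θ)) ≤ 1/θ := by
      have h2 : Real.exp (θ * r) * Real.exp (-θ * r) = 1 := by
        rw [← Real.exp_add]; ring_nf; exact Real.exp_zero
      have h5 : Real.exp (θ * r) * (Real.exp (-θ * r) - Real.exp (-θ * T)) ≤ 1 := by
        nlinarith [(Real.exp_pos (-θ * T)).le, (Real.exp_pos (θ * r)).le]
      have heq : Real.exp (θ * r) * ((Real.exp (-θ * T) - Real.exp (-θ * r)) / (-θ))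
          = (Real.exp (θ * r) * (Real.exp (-θ * r) - Real.exp (-θ * T))) / θ := by
        rw [div_neg]; ring
      rw [heq]
      exact div_le_div_of_nonneg_right h5 hθ.le
    calc r ^ (β-1) * Real.exp (θ * r) * ((Real.exp (-θ * T) - Real.exp (-θ * r)) / (-θ))
        = (Real.exp (θ * r) * ((Real.exp (-θ * T) - Real.exp (-θ * r)) / (-θ))) * r ^ (β-1) := by ring
      _ ≤ (1/θ) * r ^ (β-1) := mul_le_mul_of_nonneg_right hkey hrpow_pos.le
      _ = 1 / θ * r ^ (β - 1) := by ring
  linarith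
end

section
/- For $\beta \in (1/2,1)$ and $\theta > 0$, and for all $0 \le s < t$, $\int_{0\le r_1 \le u_1 \le s \le r_2 \le u_2 \le t} e^{-\theta(r_2 - r_1)} e^{-\theta(u_2 - u_1)} (u_1 - r_1)^{2\beta-2}(u_2 - r_2)^{2\beta-2}\,dr_1\,du_1\,dr_2\,du_2 \le \frac{\Gamma(2\beta-1)}{4\theta^{2\beta+1}(2\beta-1)}(t-s)^{2\beta-1}$. -/
open MeasureTheory Real Set intervalIntegral

namespace Stmt8Aux

lemma integral_exp_neg_mul_Ioi {c : ℝ} (hc : 0 < c) (A : ℝ) :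
    ∫ x in Ioi A, Real.exp (-(c * x)) = Real.exp (-(c * A)) / c := by
  have h := MeasureTheory.integral_comp_mul_left_Ioi (fun x => Real.exp (-x)) A hc
  simp only [smul_eq_mul] at h
  rw [show (fun x => Real.exp (-(c * x))) = fun x => (fun y => Real.exp (-y)) (c * x) from rfl] at *
  rw [h, integral_exp_neg_Ioi]
  field_simp

lemma exp_bound {c : ℝ} (hc : 0 < c) {A : ℝ} {u : Set ℝ} (hu : u ⊆ Ici A) :
    ∫ x in u, Real.exp (-(c * x)) ≤ Real.exp (-(c * A)) / c := by
  rw [← integral_exp_neg_mul_Ioi hc A]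
  apply setIntegral_mono_set
  · have := exp_neg_integrableOn_Ioi A hc
    simpa [neg_mul] using this
  · filter_upwards with x using (exp_pos _).le
  · rw [ae_le_set]
    refine measure_mono_null (fun x hx => ?_) (measure_singleton A)
    obtain ⟨hxu, hxn⟩ := hx
    have h1 : A ≤ x := hu hxu
    have h2 : ¬ A < x := hxn
    have : x = A := le_antisymm (not_lt.1 h2) h1
    simp [this]

lemma int1 {a : ℝ} (ha : -1 < a) (c B : ℝ) :
    IntegrableOn (fun v => Real.exp (c * v) * v ^ a) (Icc 0 B) := by
  rcases le_or_gt 0 B with hB | hB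
  · rw [← intervalIntegrable_iff_integrableOn_Icc_of_le hB]
    exact (intervalIntegrable_rpow' ha).continuousOn_mul
      (Real.continuous_exp.comp (continuous_const.mul continuous_id)).continuousOn
  · rw [Icc_eq_empty (by linarith)]
    exact integrableOn_empty

lemma int_gamma {a θ : ℝ} (ha : -1 < a) (hθ : 0 < θ) :
    IntegrableOn (fun v => Real.exp (-(θ * v)) * v ^ a) (Ioi 0) := by
  have base : IntegrableOn (fun x : ℝ => Real.exp (-x) * x ^ a) (Ioi 0) := by
    have := Real.GammaIntegral_convergent (show 0 < a + 1 by linarith)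
    simpa using this
  have h2 : IntegrableOn (fun x : ℝ => Real.exp (-(θ * x)) * (θ * x) ^ a) (Ioi 0) := by
    have := (integrableOn_Ioi_comp_mul_left_iff (fun x => Real.exp (-x) * x ^ a) 0 hθ).2
      (by simpa using base)
    simpa using this
  have hθa : θ ^ (-a) * θ ^ a = 1 := by
    rw [← Real.rpow_add hθ]; simp
  refine IntegrableOn.congr_fun (Integrable.const_mul h2 (θ ^ (-a))) (fun x hx => ?_) measurableSet_Ioi
  have hx0 : (0:ℝ) < x := hx
  rw [Real.mul_rpow hθ.le hx0.le]
  calc θ ^ (-a) * (Real.exp (-(θ * x)) * (θ ^ a * x ^ a))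
      = (θ ^ (-a) * θ ^ a) * (Real.exp (-(θ * x)) * x ^ a) := by ring
    _ = Real.exp (-(θ * x)) * x ^ a := by rw [hθa, one_mul]

lemma gamma_value {a θ : ℝ} (ha : -1 < a) (hθ : 0 < θ) :
    ∫ v in Ioi (0:ℝ), Real.exp (-(θ * v)) * v ^ a = (1/θ) ^ (a+1) * Real.Gamma (a+1) := by
  rw [← Real.integral_rpow_mul_exp_neg_mul_Ioi (show 0 < a + 1 by linarith) hθ]
  refine setIntegral_congr_fun measurableSet_Ioi (fun x hx => ?_)
  rw [add_sub_cancel_right, mul_comm]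

lemma refl_int (f : ℝ → ℝ) {A B : ℝ} (hAB : A ≤ B) :
    ∫ r in Icc A B, f (B - r) = ∫ v in Icc 0 (B - A), f v := by
  rw [integral_Icc_eq_integral_Ioc, integral_Icc_eq_integral_Ioc,
    ← intervalIntegral.integral_of_le hAB,
    ← intervalIntegral.integral_of_le (by linarith : (0:ℝ) ≤ B - A)]
  have h := intervalIntegral.integral_comp_sub_left (a := A) (b := B) f B
  simpa using h

lemma G1 {a θ : ℝ} (ha : -1 < a) (hθ : 0 < θ) {u : ℝ} (hu : 0 ≤ u) :
    ∫ r in Icc (0:ℝ) u, Real.exp (θ * r) * (u - r) ^ a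
      ≤ Real.exp (θ * u) * ((1/θ) ^ (a+1) * Real.Gamma (a+1)) := by
  have key : (fun r => Real.exp (θ * r) * (u - r) ^ a)
      = fun r => Real.exp (θ * u) * (Real.exp (-(θ * (u - r))) * (u - r) ^ a) := by
    funext r
    rw [← mul_assoc, ← Real.exp_add, show θ * u + -(θ * (u - r)) = θ * r from by ring]
  rw [key, MeasureTheory.integral_const_mul]
  refine mul_le_mul_of_nonneg_left ?_ (exp_pos _).le
  have refl := refl_int (fun v => Real.exp (-(θ * v)) * v ^ a) hu
  simp only [sub_zero] at refl
  rw [refl]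
  calc ∫ v in Icc (0:ℝ) u, Real.exp (-(θ * v)) * v ^ a
      ≤ ∫ v in Ioi (0:ℝ), Real.exp (-(θ * v)) * v ^ a := by
        apply setIntegral_mono_set (int_gamma ha hθ)
        · filter_upwards [ae_restrict_mem measurableSet_Ioi] with x hx
          exact mul_nonneg (exp_pos _).le (Real.rpow_nonneg (le_of_lt hx) a)
        · rw [ae_le_set]
          refine measure_mono_null (fun x hx => ?_) (measure_singleton 0)
          obtain ⟨hx1, hx2⟩ := hx
          have : x = 0 := le_antisymm (not_lt.1 hx2) hx1.1
          simp [this]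
    _ = _ := gamma_value ha hθ

lemma exp_int_le {c B : ℝ} (hc : 0 < c) (hB : 0 ≤ B) :
    ∫ x in Icc (0:ℝ) B, Real.exp (c * x) ≤ Real.exp (c * B) / c := by
  have key : (fun x => Real.exp (c * x))
      = fun x => Real.exp (c * B) * Real.exp (-(c * (B - x))) := by
    funext x; rw [← Real.exp_add, show c * B + -(c * (B - x)) = c * x from by ring]
  rw [key, MeasureTheory.integral_const_mul]
  have refl := refl_int (fun v => Real.exp (-(c * v))) hB
  simp only [sub_zero] at refl
  rw [refl]
  have hb := exp_bound hc (u := Icc (0:ℝ) B) (A := 0) (fun x hx => hx.1)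
  calc Real.exp (c*B) * ∫ x in Icc (0:ℝ) B, Real.exp (-(c*x))
      ≤ Real.exp (c*B) * (Real.exp (-(c*0))/c) := mul_le_mul_of_nonneg_left hb (exp_pos _).le
    _ = Real.exp (c*B)/c := by rw [mul_zero, neg_zero, Real.exp_zero]; ring

lemma step3_val {a θ : ℝ} (s u2 : ℝ) (hsu : s ≤ u2) :
    ∫ r in Icc s u2, Real.exp (-(θ * r)) * (u2 - r) ^ a
      = Real.exp (-(θ * u2)) * ∫ v in Icc (0:ℝ) (u2 - s), Real.exp (θ * v) * v ^ a := by
  have key : (fun r => Real.exp (-(θ * r)) * (u2 - r) ^ a)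
      = fun r => Real.exp (-(θ*u2)) * (Real.exp (θ * (u2 - r)) * (u2 - r) ^ a) := by
    funext r; rw [← mul_assoc, ← Real.exp_add, show -(θ*u2) + θ*(u2-r) = -(θ*r) from by ring]
  rw [key, MeasureTheory.integral_const_mul,
    refl_int (fun v => Real.exp (θ*v) * v ^ a) hsu]

lemma int3 {a : ℝ} (ha : -1 < a) (θ s u2 : ℝ) (hsu : s ≤ u2) :
    IntegrableOn (fun r => Real.exp (-(θ * r)) * (u2 - r) ^ a) (Icc s u2) := by
  rw [← intervalIntegrable_iff_integrableOn_Icc_of_le hsu]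
  have h1 : IntervalIntegrable (fun x => (u2 - x) ^ a) volume s u2 := by
    have := ((intervalIntegrable_rpow' (a := 0) (b := u2 - s) ha).comp_sub_left u2).symm
    simpa using this
  exact h1.continuousOn_mul
    (Real.continuous_exp.comp ((continuous_const.mul continuous_id).neg)).continuousOn

lemma int4 {a : ℝ} (ha : -1 < a) (θ s t : ℝ) :
    IntegrableOn (fun u2 => Real.exp (-(2*θ) * u2) *
      ∫ v in Icc (0:ℝ) (u2 - s), Real.exp (θ * v) * v ^ a) (Icc s t) := by
  apply ContinuousOn.integrableOn_Icc
  apply ContinuousOn.mul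
  · exact (Real.continuous_exp.comp (continuous_const.mul continuous_id)).continuousOn
  · have hG : ContinuousOn (fun x => ∫ v in Icc (0:ℝ) x, Real.exp (θ*v) * v ^ a)
        (Icc 0 (t - s)) := continuousOn_primitive_Icc (int1 ha θ (t - s))
    have hmap : MapsTo (fun u2 => u2 - s) (Icc s t) (Icc 0 (t-s)) := by
      intro x hx
      rw [mem_Icc] at hx ⊢
      exact ⟨sub_nonneg.mpr hx.1, sub_le_sub_right hx.2 s⟩
    exact hG.comp (continuous_id.sub continuous_const).continuousOn hmap


lemma fub {a θ T : ℝ} (ha : -1 < a) (hθ : 0 < θ) (hT : 0 ≤ T) :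
    ∫ y in Icc (0:ℝ) T, Real.exp (-(2*θ) * y) *
        ∫ v in Icc (0:ℝ) y, Real.exp (θ * v) * v ^ a
      ≤ T ^ (a+1) / (2 * θ * (a+1)) := by
  have hc : (0:ℝ) < 2 * θ := by linarith
  have ha1 : (0:ℝ) < a + 1 := by linarith
  set g : ℝ × ℝ → ℝ := fun p => Real.exp (-(2*θ) * p.1) * (Real.exp (θ * p.2) * p.2 ^ a)
    with hg_def
  set S : Set (ℝ × ℝ) := {p : ℝ × ℝ | p.2 ≤ p.1} with hS_def
  set F : ℝ × ℝ → ℝ := S.indicator g with hF_def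
  have hSm : MeasurableSet S := measurableSet_le measurable_snd measurable_fst
  have hgm : Measurable g := by fun_prop
  have hFm : Measurable F := hgm.indicator hSm
  have hrpow : IntegrableOn (fun v : ℝ => v ^ a) (Icc 0 T) volume := by
    rw [← intervalIntegrable_iff_integrableOn_Icc_of_le hT]
    exact intervalIntegrable_rpow' ha
  have hintv : IntegrableOn (fun v : ℝ => Real.exp (θ * v) * v ^ a) (Icc 0 T) volume := by
    rw [← intervalIntegrable_iff_integrableOn_Icc_of_le hT]
    exact (intervalIntegrable_rpow' ha).continuousOn_mul
      (Real.continuous_exp.comp (continuous_const.mul continuous_id)).continuousOn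
  have hcut : ∀ y : ℝ, (fun v => F (y, v)) = (Iic y).indicator (fun v => g (y, v)) := by
    intro y; funext v
    simp only [hF_def, hS_def, Set.indicator, mem_setOf_eq, mem_Iic]
  have hint : Integrable F ((volume.restrict (Icc (0:ℝ) T)).prod (volume.restrict (Icc (0:ℝ) T))) := by
    rw [integrable_prod_iff hFm.aestronglyMeasurable]
    constructor
    · filter_upwards with y
      rw [hcut y, integrable_indicator_iff measurableSet_Iic, IntegrableOn,
        Measure.restrict_restrict measurableSet_Iic]
      have h1 : IntegrableOn (fun v => Real.exp (-(2*θ)*y) * (Real.exp (θ * v) * v ^ a))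
          (Icc 0 T) volume := hintv.const_mul _
      exact h1.mono_set inter_subset_right
    · refine Integrable.mono' (g := fun _ => ∫ v in Icc (0:ℝ) T, Real.exp (θ*T) * v ^ a)
        (integrable_const _) (hFm.norm.aestronglyMeasurable.integral_prod_right') ?_
      filter_upwards [ae_restrict_mem measurableSet_Icc] with y hy
      rw [Real.norm_eq_abs, abs_of_nonneg (integral_nonneg (fun v => norm_nonneg _))]
      refine integral_mono_of_nonneg (Filter.Eventually.of_forall (fun v => norm_nonneg _))
        (hrpow.const_mul (Real.exp (θ*T))) ?_
      filter_upwards [ae_restrict_mem measurableSet_Icc] with v hv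
      have hva : 0 ≤ v ^ a := Real.rpow_nonneg hv.1 a
      have hgnn : 0 ≤ g (y, v) :=
        mul_nonneg (exp_pos _).le (mul_nonneg (exp_pos _).le hva)
      have hgb : g (y, v) ≤ Real.exp (θ*T) * v ^ a := by
        calc g (y, v) ≤ 1 * (Real.exp (θ * v) * v ^ a) := by
              refine mul_le_mul_of_nonneg_right ?_ (mul_nonneg (exp_pos _).le hva)
              rw [Real.exp_le_one_iff]
              nlinarith [hy.1, hθ]
          _ = Real.exp (θ * v) * v ^ a := one_mul _
          _ ≤ Real.exp (θ * T) * v ^ a :=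
              mul_le_mul_of_nonneg_right
                (Real.exp_le_exp.2 (mul_le_mul_of_nonneg_left hv.2 hθ.le)) hva
      calc ‖F (y, v)‖ ≤ ‖g (y, v)‖ := norm_indicator_le_norm_self g (y, v)
        _ = g (y, v) := by rw [Real.norm_eq_abs, abs_of_nonneg hgnn]
        _ ≤ Real.exp (θ*T) * v ^ a := hgb
  have claim1 : ∀ y ∈ Icc (0:ℝ) T,
      Real.exp (-(2*θ) * y) * ∫ v in Icc (0:ℝ) y, Real.exp (θ * v) * v ^ a
        = ∫ v in Icc (0:ℝ) T, F (y, v) := by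
    intro y hy
    rw [hcut y, MeasureTheory.integral_indicator measurableSet_Iic,
      Measure.restrict_restrict measurableSet_Iic]
    have h2 : Iic y ∩ Icc 0 T = Icc 0 y := by
      ext x
      simp only [mem_inter_iff, mem_Iic, mem_Icc]
      exact ⟨fun h => ⟨h.2.1, h.1⟩, fun h => ⟨h.2, h.1, h.2.trans hy.2⟩⟩
    rw [h2]
    exact (MeasureTheory.integral_const_mul _ _).symm
  rw [setIntegral_congr_fun measurableSet_Icc claim1]
  have swap := MeasureTheory.integral_integral_swap (f := fun y v => F (y, v))
    (μ := volume.restrict (Icc (0:ℝ) T)) (ν := volume.restrict (Icc (0:ℝ) T)) (by exact hint)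
  rw [swap]
  have claim3 : ∀ v ∈ Icc (0:ℝ) T,
      ∫ y in Icc (0:ℝ) T, F (y, v) ≤ v ^ a * (1/(2*θ)) := by
    intro v hv
    have hva : 0 ≤ v ^ a := Real.rpow_nonneg hv.1 a
    have h1 : (fun y => F (y, v)) = (Ici v).indicator
        (fun y => Real.exp (-(2*θ) * y) * (Real.exp (θ * v) * v ^ a)) := by
      funext y
      simp only [hF_def, hS_def, hg_def, Set.indicator, mem_setOf_eq, mem_Ici]
    rw [h1, MeasureTheory.integral_indicator measurableSet_Ici, Measure.restrict_restrict measurableSet_Ici,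
      MeasureTheory.integral_mul_const]
    have hb : ∫ y in Ici v ∩ Icc 0 T, Real.exp (-(2*θ) * y) ≤ Real.exp (-(2*θ*v))/(2*θ) := by
      have := exp_bound hc (u := Ici v ∩ Icc (0:ℝ) T) (A := v) inter_subset_left
      simpa [neg_mul] using this
    calc (∫ y in Ici v ∩ Icc 0 T, Real.exp (-(2*θ) * y)) * (Real.exp (θ*v) * v ^ a)
        ≤ (Real.exp (-(2*θ*v))/(2*θ)) * (Real.exp (θ*v) * v ^ a) :=
          mul_le_mul_of_nonneg_right hb (mul_nonneg (exp_pos _).le hva)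
      _ = v ^ a * ((Real.exp (-(2*θ*v)) * Real.exp (θ*v)) / (2*θ)) := by ring
      _ = v ^ a * (Real.exp (-(θ*v)) / (2*θ)) := by
          rw [← Real.exp_add, show -(2*θ*v) + θ*v = -(θ*v) from by ring]
      _ ≤ v ^ a * (1/(2*θ)) := by
          gcongr
          rw [Real.exp_le_one_iff]
          nlinarith [hv.1, hθ]
  calc ∫ v in Icc (0:ℝ) T, ∫ y in Icc (0:ℝ) T, F (y, v)
      ≤ ∫ v in Icc (0:ℝ) T, v ^ a * (1/(2*θ)) := by
        refine integral_mono_of_nonneg ?_ (hrpow.mul_const _) ?_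
        · filter_upwards [ae_restrict_mem measurableSet_Icc] with v hv
          have : ∀ y, 0 ≤ F (y, v) := fun y => by
            by_cases h : (y, v) ∈ S
            · rw [hF_def, Set.indicator_of_mem h]
              exact mul_nonneg (exp_pos _).le
                (mul_nonneg (exp_pos _).le (Real.rpow_nonneg hv.1 a))
            · rw [hF_def, Set.indicator_of_notMem h]
          exact integral_nonneg this
        · filter_upwards [ae_restrict_mem measurableSet_Icc] with v hv
          exact claim3 v hv
    _ = (∫ v in Icc (0:ℝ) T, v ^ a) * (1/(2*θ)) := MeasureTheory.integral_mul_const _ _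
    _ = (T ^ (a+1) / (a+1)) * (1/(2*θ)) := by
        rw [integral_Icc_eq_integral_Ioc, ← intervalIntegral.integral_of_le hT,
          integral_rpow (Or.inl ha), Real.zero_rpow ha1.ne', sub_zero]
    _ = T ^ (a+1) / (2*θ*(a+1)) := by
        rw [div_mul_div_comm, mul_one]
        congr 1
        ring


lemma shift_int (f : ℝ → ℝ) {s t : ℝ} (hst : s ≤ t) :
    ∫ x in Icc s t, f (x - s) = ∫ y in Icc 0 (t - s), f y := by
  rw [integral_Icc_eq_integral_Ioc, integral_Icc_eq_integral_Ioc,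
    ← intervalIntegral.integral_of_le hst,
    ← intervalIntegral.integral_of_le (by linarith : (0:ℝ) ≤ t - s)]
  simpa using intervalIntegral.integral_comp_sub_right f s

end Stmt8Aux

open Stmt8Aux in
theorem stmt_8 (β θ : ℝ) (hβ : β ∈ Set.Ioo (1/2 : ℝ) 1) (hθ : 0 < θ)
    (s t : ℝ) (hs : 0 ≤ s) (hst : s < t) :
    (∫ u2 in Set.Icc s t, ∫ r2 in Set.Icc s u2, ∫ u1 in Set.Icc (0:ℝ) s, ∫ r1 in Set.Icc (0:ℝ) u1,
        Real.exp (-θ * (r2 - r1)) * Real.exp (-θ * (u2 - u1)) *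
          (u1 - r1) ^ (2 * β - 2) * (u2 - r2) ^ (2 * β - 2))
      ≤ Real.Gamma (2 * β - 1) / (4 * θ ^ (2 * β + 1) * (2 * β - 1)) * (t - s) ^ (2 * β - 1) := by
  obtain ⟨hβ1, hβ2⟩ := hβ
  have ha : (-1:ℝ) < 2*β - 2 := by linarith
  have ha' : 2*β - 2 < 0 := by linarith
  have hγ : (0:ℝ) < 2*β - 1 := by linarith
  have hc : (0:ℝ) < 2*θ := by linarith
  set A : ℝ := 2*β - 2 with hA_def
  set K1 : ℝ := (1/θ) ^ (A+1) * Real.Gamma (A+1) with hK1_def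
  have hK1 : 0 ≤ K1 := by
    apply mul_nonneg (Real.rpow_nonneg (by positivity) _)
    exact Real.Gamma_nonneg_of_nonneg (by linarith)
  set K2 : ℝ := K1 * (Real.exp ((2*θ)*s) / (2*θ)) with hK2_def
  have hK2 : 0 ≤ K2 := mul_nonneg hK1 (by positivity)
  -- nonnegativity of inner integrals
  have hnn1 : ∀ u2 r2 u1 : ℝ, r2 ≤ u2 →
      0 ≤ ∫ r1 in Icc (0:ℝ) u1, Real.exp (-θ * (r2 - r1)) * Real.exp (-θ * (u2 - u1)) *
          (u1 - r1) ^ A * (u2 - r2) ^ A := by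
    intro u2 r2 u1 h1
    apply setIntegral_nonneg measurableSet_Icc
    intro r1 hr1
    have := hr1.2
    apply mul_nonneg (mul_nonneg (mul_nonneg (exp_pos _).le (exp_pos _).le) _) _
    · exact Real.rpow_nonneg (by linarith) _
    · exact Real.rpow_nonneg (by linarith) _
  have hnn2 : ∀ u2 r2 : ℝ, r2 ≤ u2 →
      0 ≤ ∫ u1 in Icc (0:ℝ) s, ∫ r1 in Icc (0:ℝ) u1,
          Real.exp (-θ * (r2 - r1)) * Real.exp (-θ * (u2 - u1)) *
          (u1 - r1) ^ A * (u2 - r2) ^ A := by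
    intro u2 r2 h1
    exact setIntegral_nonneg measurableSet_Icc (fun u1 _ => hnn1 u2 r2 u1 h1)
  -- step 1+2: bound the double inner integral, for fixed r2, u2
  have step2 : ∀ u2 r2 : ℝ, s ≤ r2 → r2 ≤ u2 →
      (∫ u1 in Icc (0:ℝ) s, ∫ r1 in Icc (0:ℝ) u1,
          Real.exp (-θ * (r2 - r1)) * Real.exp (-θ * (u2 - u1)) *
          (u1 - r1) ^ A * (u2 - r2) ^ A)
        ≤ K2 * Real.exp (-(θ*u2)) * (Real.exp (-(θ*r2)) * (u2 - r2) ^ A) := by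
    intro u2 r2 hsr2 hr2u2
    have hp2 : (0:ℝ) ≤ (u2 - r2) ^ A := Real.rpow_nonneg (by linarith) _
    have step1 : ∀ u1 ∈ Icc (0:ℝ) s,
        (∫ r1 in Icc (0:ℝ) u1, Real.exp (-θ * (r2 - r1)) * Real.exp (-θ * (u2 - u1)) *
            (u1 - r1) ^ A * (u2 - r2) ^ A)
          ≤ (Real.exp (-(θ*r2)) * Real.exp (-(θ*u2)) * (u2 - r2) ^ A * K1) *
              Real.exp ((2*θ)*u1) := by
      intro u1 hu1
      have key : (fun r1 => Real.exp (-θ * (r2 - r1)) * Real.exp (-θ * (u2 - u1)) *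
            (u1 - r1) ^ A * (u2 - r2) ^ A)
          = fun r1 => (Real.exp (-(θ*r2)) * Real.exp (-(θ*(u2 - u1))) * (u2 - r2) ^ A) *
              (Real.exp (θ * r1) * (u1 - r1) ^ A) := by
        funext r1
        rw [show -θ * (r2 - r1) = -(θ*r2) + θ*r1 from by ring, Real.exp_add,
          show -θ * (u2 - u1) = -(θ*(u2-u1)) from by ring]
        ring
      rw [key, MeasureTheory.integral_const_mul]
      have hD : 0 ≤ Real.exp (-(θ*r2)) * Real.exp (-(θ*(u2 - u1))) * (u2 - r2) ^ A :=
        mul_nonneg (mul_nonneg (exp_pos _).le (exp_pos _).le) hp2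
      calc (Real.exp (-(θ*r2)) * Real.exp (-(θ*(u2 - u1))) * (u2 - r2) ^ A) *
            ∫ r1 in Icc (0:ℝ) u1, Real.exp (θ * r1) * (u1 - r1) ^ A
          ≤ (Real.exp (-(θ*r2)) * Real.exp (-(θ*(u2 - u1))) * (u2 - r2) ^ A) *
            (Real.exp (θ * u1) * K1) :=
            mul_le_mul_of_nonneg_left (G1 ha hθ hu1.1) hD
        _ = (Real.exp (-(θ*r2)) * Real.exp (-(θ*u2)) * (u2 - r2) ^ A * K1) *
              Real.exp ((2*θ)*u1) := by
            rw [show (Real.exp (-(θ*r2)) * Real.exp (-(θ*(u2 - u1))) * (u2 - r2) ^ A) *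
                (Real.exp (θ * u1) * K1)
              = (Real.exp (-(θ*(u2-u1))) * Real.exp (θ * u1)) *
                (Real.exp (-(θ*r2)) * (u2 - r2) ^ A * K1) from by ring,
              ← Real.exp_add,
              show -(θ*(u2-u1)) + θ*u1 = -(θ*u2) + (2*θ)*u1 from by ring,
              Real.exp_add]
            ring
    calc (∫ u1 in Icc (0:ℝ) s, ∫ r1 in Icc (0:ℝ) u1,
            Real.exp (-θ * (r2 - r1)) * Real.exp (-θ * (u2 - u1)) *
            (u1 - r1) ^ A * (u2 - r2) ^ A)
        ≤ ∫ u1 in Icc (0:ℝ) s,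
            (Real.exp (-(θ*r2)) * Real.exp (-(θ*u2)) * (u2 - r2) ^ A * K1) *
              Real.exp ((2*θ)*u1) := by
          refine integral_mono_of_nonneg ?_ ?_ ?_
          · filter_upwards with u1 using hnn1 u2 r2 u1 hr2u2
          · exact (Continuous.integrableOn_Icc (by continuity))
          · filter_upwards [ae_restrict_mem measurableSet_Icc] with u1 hu1 using step1 u1 hu1
      _ = (Real.exp (-(θ*r2)) * Real.exp (-(θ*u2)) * (u2 - r2) ^ A * K1) *
            ∫ u1 in Icc (0:ℝ) s, Real.exp ((2*θ)*u1) := MeasureTheory.integral_const_mul _ _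
      _ ≤ (Real.exp (-(θ*r2)) * Real.exp (-(θ*u2)) * (u2 - r2) ^ A * K1) *
            (Real.exp ((2*θ)*s) / (2*θ)) := by
          refine mul_le_mul_of_nonneg_left ?_ ?_
          · have := exp_int_le hc hs
            simpa using this
          · exact mul_nonneg (mul_nonneg (mul_nonneg (exp_pos _).le (exp_pos _).le) hp2) hK1
      _ = K2 * Real.exp (-(θ*u2)) * (Real.exp (-(θ*r2)) * (u2 - r2) ^ A) := by
          rw [hK2_def]; ring
  -- step 3
  have step3 : ∀ u2 ∈ Icc s t,
      (∫ r2 in Icc s u2, ∫ u1 in Icc (0:ℝ) s, ∫ r1 in Icc (0:ℝ) u1,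
          Real.exp (-θ * (r2 - r1)) * Real.exp (-θ * (u2 - u1)) *
          (u1 - r1) ^ A * (u2 - r2) ^ A)
        ≤ K2 * (Real.exp (-(2*θ)*u2) *
            ∫ v in Icc (0:ℝ) (u2 - s), Real.exp (θ*v) * v ^ A) := by
    intro u2 hu2
    have hxx : Real.exp (-(θ*u2)) * Real.exp (-(θ*u2)) = Real.exp (-(2*θ)*u2) := by
      rw [← Real.exp_add]; congr 1; ring
    calc (∫ r2 in Icc s u2, ∫ u1 in Icc (0:ℝ) s, ∫ r1 in Icc (0:ℝ) u1,
            Real.exp (-θ * (r2 - r1)) * Real.exp (-θ * (u2 - u1)) *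
            (u1 - r1) ^ A * (u2 - r2) ^ A)
        ≤ ∫ r2 in Icc s u2,
            K2 * Real.exp (-(θ*u2)) * (Real.exp (-(θ*r2)) * (u2 - r2) ^ A) := by
          refine integral_mono_of_nonneg ?_ ?_ ?_
          · filter_upwards [ae_restrict_mem measurableSet_Icc] with r2 hr2
            exact hnn2 u2 r2 hr2.2
          · exact (int3 ha θ s u2 hu2.1).const_mul _
          · filter_upwards [ae_restrict_mem measurableSet_Icc] with r2 hr2
            exact step2 u2 r2 hr2.1 hr2.2
      _ = K2 * Real.exp (-(θ*u2)) *
            ∫ r2 in Icc s u2, Real.exp (-(θ*r2)) * (u2 - r2) ^ A :=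
          MeasureTheory.integral_const_mul _ _
      _ = K2 * Real.exp (-(θ*u2)) * (Real.exp (-(θ*u2)) *
            ∫ v in Icc (0:ℝ) (u2 - s), Real.exp (θ*v) * v ^ A) := by
          rw [step3_val s u2 hu2.1]
      _ = K2 * (Real.exp (-(2*θ)*u2) *
            ∫ v in Icc (0:ℝ) (u2 - s), Real.exp (θ*v) * v ^ A) := by
          rw [← hxx]; ring
  -- shift
  have SH : ∫ u2 in Icc s t, Real.exp (-(2*θ)*u2) *
        (∫ v in Icc (0:ℝ) (u2 - s), Real.exp (θ*v) * v ^ A)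
      = Real.exp (-(2*θ)*s) * ∫ y in Icc (0:ℝ) (t-s), Real.exp (-(2*θ)*y) *
          ∫ v in Icc (0:ℝ) y, Real.exp (θ*v) * v ^ A := by
    have e1 : (fun u2 : ℝ => Real.exp (-(2*θ)*u2) *
          ∫ v in Icc (0:ℝ) (u2 - s), Real.exp (θ*v) * v ^ A)
        = fun u2 => (fun y => Real.exp (-(2*θ)*(y+s)) *
            ∫ v in Icc (0:ℝ) y, Real.exp (θ*v) * v ^ A) (u2 - s) := by
      funext u2
      simp only [sub_add_cancel]
    have SHS := shift_int (fun y => Real.exp (-(2*θ)*(y+s)) *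
      ∫ v in Icc (0:ℝ) y, Real.exp (θ*v) * v ^ A) hst.le
    rw [e1, SHS]
    have e2 : (fun y : ℝ => Real.exp (-(2*θ)*(y+s)) *
          ∫ v in Icc (0:ℝ) y, Real.exp (θ*v) * v ^ A)
        = fun y => Real.exp (-(2*θ)*s) * (Real.exp (-(2*θ)*y) *
            ∫ v in Icc (0:ℝ) y, Real.exp (θ*v) * v ^ A) := by
      funext y
      rw [← mul_assoc, ← Real.exp_add,
        show -(2*θ)*s + -(2*θ)*y = -(2*θ)*(y+s) from by ring]
    rw [e2, MeasureTheory.integral_const_mul]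
  -- main chain
  calc (∫ u2 in Icc s t, ∫ r2 in Icc s u2, ∫ u1 in Icc (0:ℝ) s, ∫ r1 in Icc (0:ℝ) u1,
          Real.exp (-θ * (r2 - r1)) * Real.exp (-θ * (u2 - u1)) *
          (u1 - r1) ^ A * (u2 - r2) ^ A)
      ≤ ∫ u2 in Icc s t, K2 * (Real.exp (-(2*θ)*u2) *
          ∫ v in Icc (0:ℝ) (u2 - s), Real.exp (θ*v) * v ^ A) := by
        refine integral_mono_of_nonneg ?_ ((int4 ha θ s t).const_mul K2) ?_
        · filter_upwards [ae_restrict_mem measurableSet_Icc] with u2 _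
          exact setIntegral_nonneg measurableSet_Icc (fun r2 hr2 => hnn2 u2 r2 hr2.2)
        · filter_upwards [ae_restrict_mem measurableSet_Icc] with u2 hu2
          exact step3 u2 hu2
    _ = K2 * ∫ u2 in Icc s t, Real.exp (-(2*θ)*u2) *
          ∫ v in Icc (0:ℝ) (u2 - s), Real.exp (θ*v) * v ^ A :=
        MeasureTheory.integral_const_mul _ _
    _ = K2 * (Real.exp (-(2*θ)*s) * ∫ y in Icc (0:ℝ) (t-s), Real.exp (-(2*θ)*y) *
          ∫ v in Icc (0:ℝ) y, Real.exp (θ*v) * v ^ A) := by rw [SH]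
    _ ≤ K2 * (Real.exp (-(2*θ)*s) * ((t-s) ^ (A+1) / (2*θ*(A+1)))) := by
        refine mul_le_mul_of_nonneg_left
          (mul_le_mul_of_nonneg_left (fub ha hθ (by linarith)) (exp_pos _).le) hK2
    _ = Real.Gamma (2 * β - 1) / (4 * θ ^ (2 * β + 1) * (2 * β - 1)) * (t - s) ^ (2 * β - 1) := by
        have hA1 : A + 1 = 2*β - 1 := by rw [hA_def]; ring
        have hpow : θ ^ (2*β+1) = θ ^ (2*β-1) * (θ*θ) := by
          rw [show 2*β+1 = (2*β-1) + 2 from by ring, Real.rpow_add hθ, Real.rpow_two]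
          ring
        rw [hK2_def, hK1_def, hA1,
          show -(2*θ)*s = -((2*θ)*s) from by ring, Real.exp_neg,
          one_div, Real.inv_rpow hθ.le, hpow]
        have hX : θ ^ (2*β-1) ≠ 0 := ne_of_gt (Real.rpow_pos_of_pos hθ _)
        have hE : Real.exp ((2*θ)*s) ≠ 0 := (Real.exp_pos _).ne'
        have hγ' : (2*β-1) ≠ 0 := ne_of_gt hγ
        field_simp
        ring
end

section
/- Let $c > 0$ and $T > 0$, and for $z > -c\sqrt{T}$ set $\nu(z) = \frac{c\sqrt{T}}{2\beta}\big[(1 + \frac{z}{c\sqrt{T}})^{-2\beta} - 1\big]$ where $\beta \in (1/2,1)$. Let $\Phi$ denote the standard normal CDF and $\bar\Phi = 1 - \Phi$. Then there exists a constant $C > 0$ independent of $T$ such that $\sup_{z > -c\sqrt{T}} |\bar\Phi(\nu(z)) - \Phi(z)| \leq C/\sqrt{T}$ for all $T \ge 1$. -/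
open MeasureTheory Real Set Filter

noncomputable def gpdf17 (t : ℝ) : ℝ := Real.exp (-t ^ (2:ℕ) / 2) / Real.sqrt (2 * Real.pi)

lemma gpdf17_nonneg (t : ℝ) : 0 ≤ gpdf17 t := by
  unfold gpdf17; positivity

lemma gpdf17_eq (t : ℝ) : gpdf17 t = Real.exp (-(1/2) * t ^ 2) / Real.sqrt (2 * Real.pi) := by
  unfold gpdf17; ring_nf

lemma gpdf17_integrable : Integrable gpdf17 := by
  have h := (integrable_exp_neg_mul_sq (by norm_num : (0:ℝ) < 1/2)).div_const
    (Real.sqrt (2 * Real.pi))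
  refine h.congr ?_
  filter_upwards with t
  rw [gpdf17_eq]

lemma gpdf17_total : ∫ t, gpdf17 t = 1 := by
  have h := integral_gaussian (1/2 : ℝ)
  simp_rw [gpdf17_eq, integral_div, h]
  rw [show (π / (1/2)) = 2 * π by ring]
  rw [div_self (by positivity)]

noncomputable def Phi17 (z : ℝ) : ℝ := ∫ t in Set.Iic z, gpdf17 t

lemma Phi17_diff {g z : ℝ} (h : g ≤ z) :
    Phi17 z - Phi17 g = ∫ t in Set.Ioc g z, gpdf17 t := by
  unfold Phi17
  rw [← Iic_union_Ioc_eq_Iic h] at *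
  rw [setIntegral_union (by exact Iic_disjoint_Ioc le_rfl) measurableSet_Ioc
    (gpdf17_integrable.integrableOn) (gpdf17_integrable.integrableOn)]
  ring

lemma Phi17_mono : Monotone Phi17 := by
  intro x y hxy
  have := Phi17_diff hxy
  have h2 : 0 ≤ ∫ t in Set.Ioc x y, gpdf17 t :=
    setIntegral_nonneg measurableSet_Ioc (fun t _ => gpdf17_nonneg t)
  linarith

lemma Phi17_nonneg (z : ℝ) : 0 ≤ Phi17 z :=
  setIntegral_nonneg measurableSet_Iic (fun t _ => gpdf17_nonneg t)

lemma gpdf17_even (t : ℝ) : gpdf17 (-t) = gpdf17 t := by unfold gpdf17; ring_nf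

lemma Phi17_symm (x : ℝ) : Phi17 (-x) = 1 - Phi17 x := by
  unfold Phi17
  have h1 : (∫ t in Set.Iic (-x), gpdf17 t) = ∫ t in Set.Ioi x, gpdf17 t := by
    rw [← integral_comp_neg_Ioi]
    simp_rw [gpdf17_even]
  have h2 : (∫ t in Set.Iic x, gpdf17 t) + (∫ t in Set.Ioi x, gpdf17 t) = 1 := by
    rw [← gpdf17_total]
    exact intervalIntegral.integral_Iic_add_Ioi gpdf17_integrable.integrableOn
      gpdf17_integrable.integrableOn
  rw [h1]; linarith

lemma Phi17_le_one (z : ℝ) : Phi17 z ≤ 1 := by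
  have := Phi17_symm z
  have := Phi17_nonneg (-z)
  linarith

lemma neg_sq_half_deriv17 (t : ℝ) :
    HasDerivAt (fun s : ℝ => Real.exp (-s ^ 2 / 2)) (-t * Real.exp (-t ^ 2 / 2)) t := by
  have h1 : HasDerivAt (fun s : ℝ => -s ^ 2 / 2) (-t) t := by
    have := ((hasDerivAt_pow 2 t).neg).div_const 2
    exact this.congr_deriv (by push_cast; ring)
  have := h1.exp
  convert this using 1; ring

lemma exp_tail_int17 : Integrable (fun t : ℝ => -t * Real.exp (-t ^ 2 / 2)) := by
  have h := (integrable_mul_exp_neg_mul_sq (by norm_num : (0:ℝ) < 1/2)).neg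
  refine h.congr ?_
  filter_upwards with t
  show -(t * Real.exp (-(1/2) * t^2)) = _
  rw [show -((1:ℝ)/2) * t^2 = -t^2/2 by ring]
  ring

lemma exp_tendsto_atBot17 : Tendsto (fun t : ℝ => Real.exp (-t ^ 2 / 2)) atBot (nhds 0) := by
  apply Real.tendsto_exp_atBot.comp
  apply Tendsto.atBot_div_const (by norm_num : (0:ℝ) < 2)
  apply tendsto_neg_atTop_atBot.comp
  have : (fun t : ℝ => t ^ 2) = fun t : ℝ => (-t) ^ 2 := by funext t; ring
  rw [this]
  exact (tendsto_pow_atTop (by norm_num)).comp tendsto_neg_atBot_atTop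

lemma exp_tail_eval17 (z : ℝ) :
    ∫ t in Set.Iic z, -t * Real.exp (-t ^ 2 / 2) = Real.exp (-z ^ 2 / 2) := by
  have := integral_Iic_of_hasDerivAt_of_tendsto
    (f := fun s : ℝ => Real.exp (-s ^ 2 / 2)) (f' := fun t => -t * Real.exp (-t ^ 2 / 2))
    (a := z) (m := 0)
    (neg_sq_half_deriv17 z).continuousAt.continuousWithinAt
    (fun x _ => neg_sq_half_deriv17 x) exp_tail_int17.integrableOn exp_tendsto_atBot17
  rw [this]; ring

lemma Phi17_tail {z : ℝ} (hz : z < 0) : Phi17 z ≤ 1 / (-z * Real.sqrt (2 * Real.pi)) := by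
  have hs : 0 < Real.sqrt (2 * Real.pi) := Real.sqrt_pos.mpr (by positivity)
  have step1 : Phi17 z ≤ ∫ t in Set.Iic z,
      -t * Real.exp (-t ^ 2 / 2) / (-z * Real.sqrt (2 * Real.pi)) := by
    apply setIntegral_mono_on gpdf17_integrable.integrableOn
      ((exp_tail_int17.div_const _).integrableOn) measurableSet_Iic
    intro t ht
    simp only [Set.mem_Iic] at ht
    unfold gpdf17
    rw [show t ^ (2:ℕ) = t ^ 2 from rfl, div_le_div_iff₀ hs (by nlinarith)]
    have he := Real.exp_pos (-t ^ 2 / 2)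
    nlinarith [mul_nonneg (mul_nonneg (sub_nonneg.2 ht) he.le) hs.le]
  have step2 : (∫ t in Set.Iic z, -t * Real.exp (-t ^ 2 / 2) / (-z * Real.sqrt (2 * Real.pi)))
      = Real.exp (-z ^ 2 / 2) / (-z * Real.sqrt (2 * Real.pi)) := by
    rw [integral_div, exp_tail_eval17]
  have he : Real.exp (-z ^ 2 / 2) ≤ 1 := by
    rw [show (1:ℝ) = Real.exp 0 from (Real.exp_zero).symm]
    apply Real.exp_le_exp.mpr; nlinarith
  calc Phi17 z ≤ _ := step1
    _ = _ := step2
    _ ≤ 1 / (-z * Real.sqrt (2 * Real.pi)) := by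
        apply div_le_div_of_nonneg_right ?_ ?_ |>.trans_eq rfl
        · exact he
        · nlinarith

section rpowLemmas
variable {q : ℝ}

lemma P1_17 {u : ℝ} (hu : -1 < u) (hq0 : 0 < q) : 1 - q * u ≤ (1 + u) ^ (-q) := by
  have h0 : (0:ℝ) < 1 + u := by linarith
  rw [Real.rpow_def_of_pos h0]
  have hlog : Real.log (1 + u) ≤ u := by
    have := Real.log_le_sub_one_of_pos h0; linarith
  have h1 : Real.log (1 + u) * -q + 1 ≤ Real.exp (Real.log (1 + u) * -q) :=
    Real.add_one_le_exp _
  nlinarith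

lemma P2_17 {u : ℝ} (hu : 0 ≤ u) (hq0 : 1 ≤ q) : (1 + u) ^ (-q) ≤ 1 / (1 + q * u) := by
  have h0 : (0:ℝ) < 1 + u := by linarith
  have hb : 1 + q * u ≤ (1 + u) ^ q := by
    have := one_add_mul_self_le_rpow_one_add (by linarith : (-1:ℝ) ≤ u) hq0
    linarith
  have hpos : (0:ℝ) < 1 + q * u := by nlinarith
  rw [Real.rpow_neg h0.le, one_div]
  exact inv_anti₀ hpos hb

lemma P2'_17 {u : ℝ} (hu : 0 ≤ u) (hq0 : 1 ≤ q) :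
    (1 + u) ^ (-q) - 1 + q * u ≤ q ^ 2 * u ^ 2 := by
  have h := P2_17 hu hq0
  have hpos : (0:ℝ) < 1 + q * u := by nlinarith
  have key : 1 / (1 + q * u) - 1 + q * u ≤ q ^ 2 * u ^ 2 := by
    rw [div_sub' hpos.ne', div_add' _ _ _ hpos.ne', div_le_iff₀ hpos]
    nlinarith [mul_nonneg (sq_nonneg (q * u)) (mul_nonneg (by linarith : (0:ℝ) ≤ q) hu)]
  linarith

lemma P3_17 {u : ℝ} (hu : 0 ≤ u) (hu1 : u ≤ 1) (hq0 : 1 ≤ q) (hq2 : q ≤ 2) :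
    q * u / 4 ≤ 1 - (1 + u) ^ (-q) := by
  have h := P2_17 hu hq0
  have hpos : (0:ℝ) < 1 + q * u := by nlinarith
  have key : 1 / (1 + q * u) ≤ 1 - q * u / 4 := by
    rw [div_le_iff₀ hpos]
    have hqu : q * u ≤ 2 := by nlinarith
    nlinarith [mul_nonneg (mul_nonneg (by linarith : (0:ℝ) ≤ q) hu)
      (by linarith : (0:ℝ) ≤ 3 - q * u)]
  linarith

lemma P4_17 {u : ℝ} (hu : 1 ≤ u) (hq0 : 1 ≤ q) : 1 - (1 + u) ^ (-q) ≥ 1 / 2 := by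
  have h0 : (0:ℝ) < 1 + u := by linarith
  have h2 : (2:ℝ) ≤ (1 + u) ^ q := by
    calc (2:ℝ) = (2:ℝ) ^ (1:ℝ) := (Real.rpow_one 2).symm
    _ ≤ (2:ℝ) ^ q := Real.rpow_le_rpow_of_exponent_le (by norm_num) hq0
    _ ≤ (1 + u) ^ q := Real.rpow_le_rpow (by norm_num) (by linarith) (by linarith)
  rw [Real.rpow_neg h0.le]
  have : ((1 + u) ^ q)⁻¹ ≤ 2⁻¹ := inv_anti₀ (by norm_num) h2
  linarith

lemma P5_17 {u : ℝ} (hu1 : -(1/2) ≤ u) (hu2 : u ≤ 0) (hq1' : 1 ≤ q) (hq2' : q ≤ 2) :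
    (1 + u) ^ (-q) - 1 + q * u ≤ 24 * u ^ 2 := by
  set F : ℝ → ℝ := fun x => 24 * x ^ 2 - ((1 + x) ^ (-q) - 1 + q * x) with hF
  have hD : ∀ x : ℝ, -1 < x →
      HasDerivAt F (48 * x + q * (1 + x) ^ (-q - 1) - q) x := by
    intro x hx
    have h0 : (0:ℝ) < 1 + x := by linarith
    have h1 : HasDerivAt (fun y : ℝ => (1 + y) ^ (-q)) (-q * (1 + x) ^ (-q - 1)) x := by
      have h2 := Real.hasDerivAt_rpow_const (x := 1 + x) (p := -q) (Or.inl h0.ne')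
      have h3 : HasDerivAt (fun y : ℝ => 1 + y) 1 x := (hasDerivAt_id x).const_add 1
      have := h2.comp x h3
      simpa [Function.comp_def] using this
    have h5 : HasDerivAt (fun y : ℝ => 24 * y ^ 2) (24 * (2 * x ^ 1)) x :=
      (hasDerivAt_pow 2 x).const_mul 24
    have h6 := h5.sub ((h1.sub_const 1).add ((hasDerivAt_id x).const_mul q))
    exact h6.congr_deriv (by ring)
  have hanti : AntitoneOn F (Set.Icc (-(1/2) : ℝ) 0) := by
    apply antitoneOn_of_deriv_nonpos (convex_Icc _ _)
    · intro x hx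
      exact (hD x (by simp only [Set.mem_Icc] at hx; linarith)).continuousAt.continuousWithinAt
    · intro x hx
      rw [interior_Icc] at hx
      obtain ⟨hx1, hx2⟩ := hx
      exact (hD x (by linarith)).differentiableAt.differentiableWithinAt
    · intro x hx
      rw [interior_Icc] at hx
      simp only [Set.mem_Ioo] at hx
      obtain ⟨hx1, hx2⟩ := hx
      have h0 : (0:ℝ) < 1 + x := by linarith
      rw [(hD x (by linarith)).deriv]
      have e1 : (1 + x) ^ (-q - 1) ≤ (1 + x) ^ (-(3:ℝ)) :=
        Real.rpow_le_rpow_of_exponent_ge h0 (by linarith) (by linarith)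
      have e2 : (1 + x) ^ (-(3:ℝ)) = ((1 + x) ^ (3:ℕ))⁻¹ := by
        rw [Real.rpow_neg h0.le, ← Real.rpow_natCast (1 + x) 3]
        norm_num
      have e3 : ((1 + x) ^ (3:ℕ))⁻¹ ≤ 1 - 24 * x := by
        rw [inv_le_iff_one_le_mul₀ (by positivity)]
        nlinarith [sq_nonneg x, sq_nonneg (x + 1/2),
          mul_nonneg (mul_nonneg (neg_nonneg.2 hx2.le) (neg_nonneg.2 hx2.le))
            (neg_nonneg.2 hx2.le)]
      have e4 : (1 + x) ^ (-q - 1) ≤ 1 - 24 * x := le_trans e1 (e2 ▸ e3)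
      have e5 : q * (1 + x) ^ (-q - 1) ≤ q * (1 - 24 * x) :=
        mul_le_mul_of_nonneg_left e4 (by linarith)
      nlinarith
  have h0mem : (0:ℝ) ∈ Set.Icc (-(1/2) : ℝ) 0 := by constructor <;> norm_num
  have humem : u ∈ Set.Icc (-(1/2) : ℝ) 0 := ⟨hu1, hu2⟩
  have := hanti humem h0mem hu2
  have hF0 : F 0 = 0 := by
    simp [hF]
  rw [hF0] at this
  simp only [hF] at this
  linarith

end rpowLemmas

lemma sqrt_two_pi_ge_one17 : (1:ℝ) ≤ Real.sqrt (2 * Real.pi) := by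
  rw [show (1:ℝ) = Real.sqrt 1 by simp]
  apply Real.sqrt_le_sqrt
  nlinarith [Real.pi_gt_three]

lemma gpdf17_le {r s : ℝ} (h : r ^ 2 ≤ s ^ 2) : gpdf17 s ≤ gpdf17 r := by
  unfold gpdf17
  have hs : 0 < Real.sqrt (2 * Real.pi) := by linarith [sqrt_two_pi_ge_one17]
  have : Real.exp (-s ^ (2:ℕ) / 2) ≤ Real.exp (-r ^ (2:ℕ) / 2) :=
    Real.exp_le_exp.mpr (by push_cast; linarith)
  exact (div_le_div_iff_of_pos_right hs).mpr this

lemma gpdf17_bound (t : ℝ) : gpdf17 t ≤ Real.exp (-t ^ 2 / 2) := by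
  unfold gpdf17
  have := sqrt_two_pi_ge_one17
  rw [div_le_iff₀ (by linarith)]
  nlinarith [Real.exp_pos (-t^2/2), Real.exp_pos ((-t^(2:ℕ))/2)]

lemma sq_mul_exp_le17 {z c2 : ℝ} (hc2 : 0 < c2) : z ^ 2 * Real.exp (-z ^ 2 / c2) ≤ c2 := by
  have h1 : z ^ 2 / c2 ≤ Real.exp (z ^ 2 / c2) := by
    linarith [Real.add_one_le_exp (z ^ 2 / c2)]
  rw [show -z ^ 2 / c2 = -(z ^ 2 / c2) by ring, Real.exp_neg]
  rw [mul_inv_le_iff₀ (Real.exp_pos _)]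
  calc z ^ 2 = c2 * (z ^ 2 / c2) := by field_simp
    _ ≤ c2 * Real.exp (z ^ 2 / c2) := mul_le_mul_of_nonneg_left h1 hc2.le

lemma Phi17_diff_le {g z M : ℝ} (h : g ≤ z) (hM0 : 0 ≤ M)
    (hM : ∀ t ∈ Set.Ioc g z, gpdf17 t ≤ M) :
    Phi17 z - Phi17 g ≤ (z - g) * M := by
  rw [Phi17_diff h]
  have h1 : (∫ t in Set.Ioc g z, gpdf17 t) ≤ ∫ _t in Set.Ioc g z, M :=
    setIntegral_mono_on gpdf17_integrable.integrableOn
      (integrableOn_const measure_Ioc_lt_top.ne) measurableSet_Ioc hM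
  have h2 : (∫ _t in Set.Ioc g z, M) = (z - g) * M := by
    rw [setIntegral_const, Real.volume_real_Ioc_of_le h]
    simp [smul_eq_mul]
  linarith

lemma main_est17 {q a u : ℝ} (hq1 : 1 < q) (hq2 : q < 2) (ha : 0 < a) (hu : -1 < u) :
    Phi17 (a * u) - Phi17 (a / q * (1 - (1 + u) ^ (-q))) ≤ 64 / a := by
  have hq0 : 0 < q := by linarith
  have h1u : (0:ℝ) < 1 + u := by linarith
  have haq : 0 < a / q := by positivity
  set z : ℝ := a * u with hz_def
  set g : ℝ := a / q * (1 - (1 + u) ^ (-q)) with hg_def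
  have hgz : g ≤ z := by
    have h := P1_17 hu hq0
    have h2 : 1 - (1 + u) ^ (-q) ≤ q * u := by linarith
    calc g ≤ a / q * (q * u) := mul_le_mul_of_nonneg_left h2 haq.le
      _ = a * u := by field_simp
  have hsqpi : (1:ℝ) ≤ Real.sqrt (2 * Real.pi) := sqrt_two_pi_ge_one17
  rcases le_or_gt u (-(1/2)) with hcase1 | hcase1
  · -- u ≤ -1/2, i.e. z ≤ -a/2
    have hz0 : z < 0 := by rw [hz_def]; nlinarith
    have hza : -(a/2) ≥ z := by rw [hz_def]; nlinarith
    have htail := Phi17_tail hz0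
    have hb : 1 / (-z * Real.sqrt (2 * Real.pi)) ≤ 64 / a := by
      rw [div_le_div_iff₀ (by nlinarith) ha]
      nlinarith
    have := Phi17_nonneg g
    calc Phi17 z - Phi17 g ≤ Phi17 z := by linarith
      _ ≤ 1 / (-z * Real.sqrt (2 * Real.pi)) := htail
      _ ≤ 64 / a := hb
  · rcases le_or_gt u 0 with hcase2 | hcase2
    · -- -1/2 < u ≤ 0
      have hzg : z - g ≤ 24 * a * u ^ 2 := by
        have h5 := P5_17 hcase1.le hcase2 hq1.le hq2.le
        have heq : z - g = a / q * ((1 + u) ^ (-q) - 1 + q * u) := by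
          rw [hz_def, hg_def]; field_simp; ring
        rw [heq]
        calc a / q * ((1 + u) ^ (-q) - 1 + q * u) ≤ a / q * (24 * u ^ 2) :=
              mul_le_mul_of_nonneg_left h5 haq.le
          _ ≤ a * (24 * u ^ 2) := by
              apply mul_le_mul_of_nonneg_right _ (by positivity)
              rw [div_le_iff₀ hq0]; nlinarith
          _ = 24 * a * u ^ 2 := by ring
      have hz0 : z ≤ 0 := by rw [hz_def]; nlinarith
      have hM : ∀ t ∈ Set.Ioc g z, gpdf17 t ≤ gpdf17 z := by
        intro t ht
        obtain ⟨ht1, ht2⟩ := ht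
        exact gpdf17_le (by nlinarith)
      have hd := Phi17_diff_le hgz (gpdf17_nonneg z) hM
      have hzsq : 24 * a * u ^ 2 = 24 * z ^ 2 / a := by rw [hz_def]; field_simp
      calc Phi17 z - Phi17 g ≤ (z - g) * gpdf17 z := hd
        _ ≤ (24 * a * u ^ 2) * gpdf17 z :=
            mul_le_mul_of_nonneg_right hzg (gpdf17_nonneg z)
        _ = (24 * z ^ 2 / a) * gpdf17 z := by rw [hzsq]
        _ ≤ (24 * z ^ 2 / a) * Real.exp (-z ^ 2 / 2) :=
            mul_le_mul_of_nonneg_left (gpdf17_bound z) (by positivity)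
        _ = (24 / a) * (z ^ 2 * Real.exp (-z ^ 2 / 2)) := by ring
        _ ≤ (24 / a) * 2 :=
            mul_le_mul_of_nonneg_left (sq_mul_exp_le17 (by norm_num)) (by positivity)
        _ ≤ 64 / a := by rw [div_mul_eq_mul_div]; gcongr <;> norm_num
    · rcases le_or_gt u 1 with hcase3 | hcase3
      · -- 0 < u ≤ 1
        have hzg : z - g ≤ 2 * a * u ^ 2 := by
          have h5 := P2'_17 hcase2.le hq1.le
          have heq : z - g = a / q * ((1 + u) ^ (-q) - 1 + q * u) := by
            rw [hz_def, hg_def]; field_simp; ring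
          rw [heq]
          calc a / q * ((1 + u) ^ (-q) - 1 + q * u) ≤ a / q * (q ^ 2 * u ^ 2) :=
                mul_le_mul_of_nonneg_left h5 haq.le
            _ = q * (a * u ^ 2) := by field_simp
            _ ≤ 2 * (a * u ^ 2) :=
                mul_le_mul_of_nonneg_right hq2.le (by positivity)
            _ = 2 * a * u ^ 2 := by ring
        have hg4 : z / 4 ≤ g := by
          have h3 := P3_17 hcase2.le hcase3 hq1.le hq2.le
          rw [hz_def, hg_def]
          calc a * u / 4 = a / q * (q * u / 4) := by field_simp
            _ ≤ a / q * (1 - (1 + u) ^ (-q)) := mul_le_mul_of_nonneg_left h3 haq.le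
        have hz0 : 0 ≤ z := by rw [hz_def]; positivity
        have hM : ∀ t ∈ Set.Ioc g z, gpdf17 t ≤ gpdf17 (z / 4) := by
          intro t ht
          obtain ⟨ht1, ht2⟩ := ht
          apply gpdf17_le
          have h4 : z / 4 ≤ t := by linarith
          nlinarith
        have hd := Phi17_diff_le hgz (gpdf17_nonneg _) hM
        have hexp : Real.exp (-(z/4) ^ 2 / 2) = Real.exp (-z ^ 2 / 32) := by
          congr 1; ring
        have hzsq : 2 * a * u ^ 2 = 2 * z ^ 2 / a := by rw [hz_def]; field_simp
        calc Phi17 z - Phi17 g ≤ (z - g) * gpdf17 (z / 4) := hd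
          _ ≤ (2 * a * u ^ 2) * gpdf17 (z / 4) :=
              mul_le_mul_of_nonneg_right hzg (gpdf17_nonneg _)
          _ = (2 * z ^ 2 / a) * gpdf17 (z / 4) := by rw [hzsq]
          _ ≤ (2 * z ^ 2 / a) * Real.exp (-z ^ 2 / 32) := by
              apply mul_le_mul_of_nonneg_left _ (by positivity)
              rw [← hexp]; exact gpdf17_bound (z / 4)
          _ = (2 / a) * (z ^ 2 * Real.exp (-z ^ 2 / 32)) := by ring
          _ ≤ (2 / a) * 32 :=
              mul_le_mul_of_nonneg_left (sq_mul_exp_le17 (by norm_num)) (by positivity)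
          _ = 64 / a := by ring
      · -- u > 1
        have hg4 : a / 4 ≤ g := by
          have h4 := P4_17 hcase3.le hq1.le
          rw [hg_def]
          calc a / 4 = a / q * (q / 4) := by field_simp
            _ ≤ a / q * (1 / 2) := by
                apply mul_le_mul_of_nonneg_left _ haq.le
                linarith
            _ ≤ a / q * (1 - (1 + u) ^ (-q)) :=
                mul_le_mul_of_nonneg_left h4 haq.le
        have hgpos : 0 < g := by linarith
        have htail : 1 - Phi17 g ≤ 1 / (g * Real.sqrt (2 * Real.pi)) := by
          have h := Phi17_tail (z := -g) (by linarith)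
          rw [Phi17_symm] at h
          simpa using h
        have hb : 1 / (g * Real.sqrt (2 * Real.pi)) ≤ 64 / a := by
          rw [div_le_div_iff₀ (by nlinarith) ha]
          nlinarith
        have h1 := Phi17_le_one z
        calc Phi17 z - Phi17 g ≤ 1 - Phi17 g := by linarith
          _ ≤ 1 / (g * Real.sqrt (2 * Real.pi)) := htail
          _ ≤ 64 / a := hb

theorem stmt_17 (β c : ℝ) (hβ : β ∈ Set.Ioo (1/2 : ℝ) 1) (hc : 0 < c)
    (Φ : ℝ → ℝ)
    (hΦ : Φ = fun z => ∫ t in Set.Iic z, Real.exp (-t ^ (2:ℕ) / 2) / Real.sqrt (2 * Real.pi)) :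
    ∃ C > (0:ℝ), ∀ T : ℝ, 1 ≤ T → ∀ z : ℝ, -c * Real.sqrt T < z →
      |(1 - Φ (c * Real.sqrt T / (2 * β) *
            ((1 + z / (c * Real.sqrt T)) ^ (-(2 * β)) - 1))) - Φ z|
        ≤ C / Real.sqrt T := by
  obtain ⟨hβ1, hβ2⟩ := hβ
  have hP : ∀ x, Φ x = Phi17 x := fun x => by rw [hΦ]; rfl
  refine ⟨64 / c, by positivity, ?_⟩
  intro T hT z hz
  rw [hP, hP]
  have hs1 : (1:ℝ) ≤ Real.sqrt T := by
    rw [show (1:ℝ) = Real.sqrt 1 by simp]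
    exact Real.sqrt_le_sqrt hT
  have ha : 0 < c * Real.sqrt T := by nlinarith
  have hu : -1 < z / (c * Real.sqrt T) := by
    rw [lt_div_iff₀ ha]; nlinarith [hz]
  have key := main_est17 (q := 2 * β) (a := c * Real.sqrt T) (u := z / (c * Real.sqrt T))
    (by linarith) (by linarith) ha hu
  have hzz : c * Real.sqrt T * (z / (c * Real.sqrt T)) = z := by field_simp
  rw [hzz] at key
  have hsymm : 1 - Phi17 (c * Real.sqrt T / (2 * β) *
      ((1 + z / (c * Real.sqrt T)) ^ (-(2 * β)) - 1))
      = Phi17 (c * Real.sqrt T / (2 * β) * (1 - (1 + z / (c * Real.sqrt T)) ^ (-(2 * β)))) := by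
    rw [show c * Real.sqrt T / (2 * β) * (1 - (1 + z / (c * Real.sqrt T)) ^ (-(2 * β)))
      = -(c * Real.sqrt T / (2 * β) *
          ((1 + z / (c * Real.sqrt T)) ^ (-(2 * β)) - 1)) by ring]
    rw [Phi17_symm]
  rw [hsymm]
  have hmono : Phi17 (c * Real.sqrt T / (2 * β) *
      (1 - (1 + z / (c * Real.sqrt T)) ^ (-(2 * β)))) ≤ Phi17 z := by
    apply Phi17_mono
    have h := P1_17 hu (by linarith : (0:ℝ) < 2 * β)
    have h2 : 1 - (1 + z / (c * Real.sqrt T)) ^ (-(2 * β)) ≤ 2 * β * (z / (c * Real.sqrt T)) := by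
      linarith
    have haq : (0:ℝ) < c * Real.sqrt T / (2 * β) := by positivity
    calc c * Real.sqrt T / (2 * β) * (1 - (1 + z / (c * Real.sqrt T)) ^ (-(2 * β)))
        ≤ c * Real.sqrt T / (2 * β) * (2 * β * (z / (c * Real.sqrt T))) :=
          mul_le_mul_of_nonneg_left h2 haq.le
      _ = z := by field_simp
  rw [abs_sub_comm, abs_of_nonneg (by linarith)]
  calc Phi17 z - Phi17 (c * Real.sqrt T / (2 * β) *
        (1 - (1 + z / (c * Real.sqrt T)) ^ (-(2 * β))))
      ≤ 64 / (c * Real.sqrt T) := key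
    _ = 64 / c / Real.sqrt T := by rw [div_div]
end
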